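/- Let k ∈ ℤ \ {0} and v ∈ C²((0,∞)). Define Q on ℝ² \ {0} by Q(x) = v(r) E₀, where r = |x|. Then at every x ∈ ℝ² \ {0}, 𝓛Q = (1/3)( v''(r) + v'(r)/r ) E₀ − (1/√3)( v''(r) − v'(r)/r ) ( E₁(φ) cos((k−2)φ) − E₂(φ) sin((k−2)φ) ), where φ is the polar angle of x. -/

import Mathlib

open Real Matrix MeasureTheory

noncomputable section

/-- Partial derivative in direction `i` of a scalar function on `ℝ²`. -/
def pd2 (i : Fin 2) (f : (Fin 2 → ℝ) → ℝ) (x : Fin 2 → ℝ) : ℝ :=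
  fderiv ℝ f x (Pi.single i 1)

/-- Partial derivative with index in `Fin 3`, with the convention `∂₃ ≡ 0`. -/
def pd (k : Fin 3) (f : (Fin 2 → ℝ) → ℝ) (x : Fin 2 → ℝ) : ℝ :=
  if h : (k : ℕ) < 2 then pd2 ⟨(k : ℕ), h⟩ f x else 0

/-- Componentwise two-dimensional Laplacian of a matrix-valued map. -/
def lap2 (Q : (Fin 2 → ℝ) → Matrix (Fin 3) (Fin 3) ℝ) (x : Fin 2 → ℝ) :
    Matrix (Fin 3) (Fin 3) ℝ :=
  Matrix.of fun i j => ∑ k : Fin 2, pd2 k (fun y => pd2 k (fun z => Q z i j) y) x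

/-- The operator `𝓛 Q_{ij} = ∂_j∂_k Q_{ik} + ∂_i∂_k Q_{jk} − (2/3)∂_l∂_k Q_{lk} δ_{ij}`. -/
def Lop (Q : (Fin 2 → ℝ) → Matrix (Fin 3) (Fin 3) ℝ) (x : Fin 2 → ℝ) :
    Matrix (Fin 3) (Fin 3) ℝ :=
  Matrix.of fun i j =>
    (∑ k, pd j (fun y => pd k (fun z => Q z i k) y) x)
    + (∑ k, pd i (fun y => pd k (fun z => Q z j k) y) x)
    - (2/3) * (∑ l, ∑ k, pd l (fun y => pd k (fun z => Q z l k) y) x)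
        * (if i = j then (1 : ℝ) else 0)

/-- The Euler–Lagrange equations (EL) at a point. -/
def EL (L M a2 b2 c2 : ℝ) (Q : (Fin 2 → ℝ) → Matrix (Fin 3) (Fin 3) ℝ)
    (x : Fin 2 → ℝ) : Prop :=
  L • lap2 Q x + M • Lop Q x =
    (-a2) • Q x
      - b2 • (Q x * Q x - ((Q x * Q x).trace / 3) • (1 : Matrix (Fin 3) (Fin 3) ℝ))
      + (c2 * (Q x * Q x).trace) • Q x

def nv (k : ℤ) (φ : ℝ) : Fin 3 → ℝ :=
  ![Real.cos ((k : ℝ) * φ / 2), Real.sin ((k : ℝ) * φ / 2), 0]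

def mv (k : ℤ) (φ : ℝ) : Fin 3 → ℝ :=
  ![-Real.sin ((k : ℝ) * φ / 2), Real.cos ((k : ℝ) * φ / 2), 0]

def e3 : Fin 3 → ℝ := ![0, 0, 1]

def E0 : Matrix (Fin 3) (Fin 3) ℝ :=
  Real.sqrt (3/2) • (vecMulVec e3 e3 - (1/3 : ℝ) • (1 : Matrix (Fin 3) (Fin 3) ℝ))

def E1 (k : ℤ) (φ : ℝ) : Matrix (Fin 3) (Fin 3) ℝ :=
  Real.sqrt 2 •
    (vecMulVec (nv k φ) (nv k φ)
      - (1/2 : ℝ) • ((1 : Matrix (Fin 3) (Fin 3) ℝ) - vecMulVec e3 e3))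

def E2 (k : ℤ) (φ : ℝ) : Matrix (Fin 3) (Fin 3) ℝ :=
  (Real.sqrt 2)⁻¹ • (vecMulVec (nv k φ) (mv k φ) + vecMulVec (mv k φ) (nv k φ))

def E3m (k : ℤ) (φ : ℝ) : Matrix (Fin 3) (Fin 3) ℝ :=
  (Real.sqrt 2)⁻¹ • (vecMulVec (nv k φ) e3 + vecMulVec e3 (nv k φ))

def E4m (k : ℤ) (φ : ℝ) : Matrix (Fin 3) (Fin 3) ℝ :=
  (Real.sqrt 2)⁻¹ • (vecMulVec (mv k φ) e3 + vecMulVec e3 (mv k φ))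

def sPlus (a2 b2 c2 : ℝ) : ℝ := (b2 + Real.sqrt (b2^2 + 24 * a2 * c2)) / (4 * c2)

/-- Rotation of `ℝ²` by angle `ψ`. -/
def rot2 (ψ : ℝ) (x : Fin 2 → ℝ) : Fin 2 → ℝ :=
  ![Real.cos ψ * x 0 - Real.sin ψ * x 1, Real.sin ψ * x 0 + Real.cos ψ * x 1]

/-- Rotation of `ℝ³` about `e₃` by angle `kψ/2`. -/
def Rk (k : ℤ) (ψ : ℝ) : Matrix (Fin 3) (Fin 3) ℝ :=
  Matrix.of
    ![![Real.cos ((k : ℝ) * ψ / 2), -Real.sin ((k : ℝ) * ψ / 2), 0],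
      ![Real.sin ((k : ℝ) * ψ / 2), Real.cos ((k : ℝ) * ψ / 2), 0],
      ![0, 0, 1]]

end


noncomputable section Aux

def auxP2 (i : Fin 2) : (Fin 2 → ℝ) →L[ℝ] ℝ := ContinuousLinearMap.proj i

def auxRho (x : Fin 2 → ℝ) : ℝ := Real.sqrt (x 0 ^ 2 + x 1 ^ 2)

def auxDR (x : Fin 2 → ℝ) : (Fin 2 → ℝ) →L[ℝ] ℝ :=
  (auxRho x)⁻¹ • (x 0 • auxP2 0 + x 1 • auxP2 1)

lemma auxRho_pos {x : Fin 2 → ℝ} (hx : 0 < x 0 ^ 2 + x 1 ^ 2) : 0 < auxRho x :=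
  Real.sqrt_pos.2 hx

lemma auxDR_apply (x : Fin 2 → ℝ) (i : Fin 2) :
    auxDR x (Pi.single i 1) = x i / auxRho x := by
  fin_cases i <;>
    simp [auxDR, auxP2, Pi.single_apply, div_eq_inv_mul]

lemma hasFDerivAt_auxRho {x : Fin 2 → ℝ} (hx : 0 < x 0 ^ 2 + x 1 ^ 2) :
    HasFDerivAt auxRho (auxDR x) x := by
  have h0 : HasFDerivAt (fun y : Fin 2 → ℝ => y 0) (auxP2 0) x := (auxP2 0).hasFDerivAt
  have h1 : HasFDerivAt (fun y : Fin 2 → ℝ => y 1) (auxP2 1) x := (auxP2 1).hasFDerivAt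
  have hs : HasFDerivAt (fun y : Fin 2 → ℝ => y 0 * y 0 + y 1 * y 1)
      ((x 0 • auxP2 0 + x 0 • auxP2 0) + (x 1 • auxP2 1 + x 1 • auxP2 1)) x :=
    (h0.mul h0).add (h1.mul h1)
  have hx' : x 0 * x 0 + x 1 * x 1 ≠ 0 := by nlinarith
  have key := (Real.hasDerivAt_sqrt hx').comp_hasFDerivAt x hs
  have hfun : auxRho = fun y : Fin 2 → ℝ => Real.sqrt (y 0 * y 0 + y 1 * y 1) := by
    funext y; simp [auxRho, pow_two]
  have hρ : auxRho x ≠ 0 := (auxRho_pos hx).ne'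
  rw [hfun]
  refine key.congr_fderiv ?_
  ext u
  simp only [auxDR, ContinuousLinearMap.smul_apply, ContinuousLinearMap.add_apply,
    smul_eq_mul]
  have h2 : Real.sqrt (x 0 * x 0 + x 1 * x 1) = auxRho x := by
    simp [auxRho, pow_two]
  rw [h2]
  field_simp
  ring

lemma auxU_open : IsOpen {y : Fin 2 → ℝ | 0 < y 0 ^ 2 + y 1 ^ 2} := by
  have : Continuous fun y : Fin 2 → ℝ => y 0 ^ 2 + y 1 ^ 2 := by continuity
  exact isOpen_lt continuous_const this

lemma pd2_congr' {g g' : (Fin 2 → ℝ) → ℝ} {x : Fin 2 → ℝ} (i : Fin 2)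
    (h : ∀ y : Fin 2 → ℝ, 0 < y 0 ^ 2 + y 1 ^ 2 → g y = g' y)
    (hx : 0 < x 0 ^ 2 + x 1 ^ 2) : pd2 i g x = pd2 i g' x := by
  unfold pd2
  rw [Filter.EventuallyEq.fderiv_eq
    (Filter.eventuallyEq_of_mem (auxU_open.mem_nhds hx) h)]

lemma pd_congr' {g g' : (Fin 2 → ℝ) → ℝ} {x : Fin 2 → ℝ} (j : Fin 3)
    (h : ∀ y : Fin 2 → ℝ, 0 < y 0 ^ 2 + y 1 ^ 2 → g y = g' y)
    (hx : 0 < x 0 ^ 2 + x 1 ^ 2) : pd j g x = pd j g' x := by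
  unfold pd
  split
  · exact pd2_congr' _ h hx
  · rfl

lemma Lop_congr' {Q Q' : (Fin 2 → ℝ) → Matrix (Fin 3) (Fin 3) ℝ} {x : Fin 2 → ℝ}
    (h : ∀ y : Fin 2 → ℝ, 0 < y 0 ^ 2 + y 1 ^ 2 → Q y = Q' y)
    (hx : 0 < x 0 ^ 2 + x 1 ^ 2) : Lop Q x = Lop Q' x := by
  have hin : ∀ (a b kk : Fin 3) (y : Fin 2 → ℝ), 0 < y 0 ^ 2 + y 1 ^ 2 →
      pd kk (fun z => Q z a b) y = pd kk (fun z => Q' z a b) y := by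
    intro a b kk y hy
    exact pd_congr' kk (fun z hz => by rw [h z hz]) hy
  unfold Lop
  ext i j
  simp only [Matrix.of_apply]
  congr 1
  · congr 1
    · exact Finset.sum_congr rfl fun k _ => pd_congr' _ (fun y hy => hin i k k y hy) hx
    · exact Finset.sum_congr rfl fun k _ => pd_congr' _ (fun y hy => hin j k k y hy) hx
  · congr 2
    exact Finset.sum_congr rfl fun l _ =>
      Finset.sum_congr rfl fun k _ => pd_congr' _ (fun y hy => hin l k k y hy) hx

lemma hasFDerivAt_vRho {v : ℝ → ℝ} {x : Fin 2 → ℝ} (hx : 0 < x 0 ^ 2 + x 1 ^ 2)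
    (hv : HasDerivAt v (deriv v (auxRho x)) (auxRho x)) :
    HasFDerivAt (fun y => v (auxRho y)) (deriv v (auxRho x) • auxDR x) x :=
  hv.comp_hasFDerivAt x (hasFDerivAt_auxRho hx)

def auxG (v : ℝ → ℝ) (j : Fin 2) (y : Fin 2 → ℝ) : ℝ :=
  deriv v (auxRho y) * (y j * (auxRho y)⁻¹)

lemma hasFDerivAt_auxG {v : ℝ → ℝ} {x : Fin 2 → ℝ} (j : Fin 2)
    (hx : 0 < x 0 ^ 2 + x 1 ^ 2)
    (hv2 : HasDerivAt (deriv v) (deriv (deriv v) (auxRho x)) (auxRho x)) :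
    HasFDerivAt (auxG v j)
      (deriv v (auxRho x) • (x j • (-(auxRho x ^ 2)⁻¹ • auxDR x) + (auxRho x)⁻¹ • auxP2 j)
        + (x j * (auxRho x)⁻¹) • (deriv (deriv v) (auxRho x) • auxDR x)) x := by
  have hρ : auxRho x ≠ 0 := (auxRho_pos hx).ne'
  have h1 : HasFDerivAt (fun y => deriv v (auxRho y))
      (deriv (deriv v) (auxRho x) • auxDR x) x :=
    hv2.comp_hasFDerivAt x (hasFDerivAt_auxRho hx)
  have hinv : HasFDerivAt (fun y => (auxRho y)⁻¹)
      (-(auxRho x ^ 2)⁻¹ • auxDR x) x :=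
    (hasDerivAt_inv hρ).comp_hasFDerivAt x (hasFDerivAt_auxRho hx)
  have hj : HasFDerivAt (fun y : Fin 2 → ℝ => y j) (auxP2 j) x := (auxP2 j).hasFDerivAt
  exact h1.mul (hj.mul hinv)

lemma pd2_auxG {v : ℝ → ℝ} {x : Fin 2 → ℝ} (i j : Fin 2)
    (hx : 0 < x 0 ^ 2 + x 1 ^ 2)
    (hv2 : HasDerivAt (deriv v) (deriv (deriv v) (auxRho x)) (auxRho x)) :
    pd2 i (auxG v j) x =
      deriv (deriv v) (auxRho x) * (x i * x j) / (auxRho x) ^ 2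
        + deriv v (auxRho x) *
          ((if i = j then 1 else 0) / auxRho x - x i * x j / (auxRho x) ^ 3) := by
  have hρ : auxRho x ≠ 0 := (auxRho_pos hx).ne'
  have h := (hasFDerivAt_auxG j hx hv2).fderiv
  unfold pd2
  rw [h]
  have hPij : (auxP2 j) (Pi.single i (1:ℝ)) = if i = j then 1 else 0 := by
    fin_cases i <;> fin_cases j <;> simp [auxP2, Pi.single_apply]
  simp only [ContinuousLinearMap.add_apply, ContinuousLinearMap.smul_apply,
    smul_eq_mul, auxDR_apply, hPij]
  field_simp
  ring_nf

def auxD2 (v : ℝ → ℝ) (i j : Fin 2) (x : Fin 2 → ℝ) : ℝ :=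
  deriv (deriv v) (auxRho x) * (x i * x j) / (auxRho x) ^ 2
    + deriv v (auxRho x) *
      ((if i = j then 1 else 0) / auxRho x - x i * x j / (auxRho x) ^ 3)

lemma pd2_scaled {v : ℝ → ℝ} (c : ℝ) (j : Fin 2) {y : Fin 2 → ℝ}
    (hy : 0 < y 0 ^ 2 + y 1 ^ 2)
    (hv1 : ∀ t : ℝ, 0 < t → HasDerivAt v (deriv v t) t) :
    pd2 j (fun z => v (auxRho z) * c) y = c * auxG v j y := by
  have hf := hasFDerivAt_vRho hy (hv1 _ (auxRho_pos hy))
  unfold pd2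
  rw [fderiv_mul_const hf.differentiableAt]
  rw [hf.fderiv]
  simp [auxG, auxDR_apply, div_eq_mul_inv]

lemma pd2_pd2_scaled {v : ℝ → ℝ} (c : ℝ) (i j : Fin 2) {x : Fin 2 → ℝ}
    (hx : 0 < x 0 ^ 2 + x 1 ^ 2)
    (hv1 : ∀ t : ℝ, 0 < t → HasDerivAt v (deriv v t) t)
    (hv2 : ∀ t : ℝ, 0 < t → HasDerivAt (deriv v) (deriv (deriv v) t) t) :
    pd2 i (fun y => pd2 j (fun z => v (auxRho z) * c) y) x = c * auxD2 v i j x := by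
  rw [pd2_congr' i (fun y hy => pd2_scaled c j hy hv1) hx]
  unfold pd2
  rw [fderiv_const_mul (hasFDerivAt_auxG j hx (hv2 _ (auxRho_pos hx))).differentiableAt]
  have := pd2_auxG i j hx (hv2 _ (auxRho_pos hx))
  unfold pd2 at this
  simp only [ContinuousLinearMap.smul_apply, smul_eq_mul, this, auxD2]

lemma polar_rep {y : Fin 2 → ℝ} (hy : 0 < y 0 ^ 2 + y 1 ^ 2) :
    ∃ θ : ℝ, y 0 = auxRho y * Real.cos θ ∧ y 1 = auxRho y * Real.sin θ := by
  set z : ℂ := ⟨y 0, y 1⟩ with hz_def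
  have hz : z ≠ 0 := by
    intro h
    rw [Complex.ext_iff] at h
    simp only [hz_def, Complex.zero_re, Complex.zero_im] at h
    rw [h.1, h.2] at hy
    norm_num at hy
  have habs : ‖z‖ = auxRho y := by
    rw [Complex.norm_def, hz_def]
    simp [Complex.normSq_mk, auxRho, pow_two]
  have hρ : auxRho y ≠ 0 := (auxRho_pos hy).ne'
  refine ⟨Complex.arg z, ?_, ?_⟩
  · have h := Complex.cos_arg hz
    rw [habs] at h
    rw [h]
    field_simp
    rfl
  · have h := Complex.sin_arg z
    rw [habs] at h
    rw [h]
    field_simp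
    rfl

end Aux

/-- `𝓛(v(r)E₀) = (1/3)(v'' + v'/r)E₀
− (1/√3)(v'' − v'/r)(E₁ cos((k−2)φ) − E₂ sin((k−2)φ))`. -/
theorem Lop_of_E0_component
    (k : ℤ) (hk : k ≠ 0) (v : ℝ → ℝ)
    (hv : ContDiffOn ℝ 2 v (Set.Ioi 0))
    (Q : (Fin 2 → ℝ) → Matrix (Fin 3) (Fin 3) ℝ)
    (hQ : ∀ r > (0 : ℝ), ∀ φ : ℝ, Q ![r * Real.cos φ, r * Real.sin φ] = v r • E0) :
    ∀ r > (0 : ℝ), ∀ φ : ℝ,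
      Lop Q ![r * Real.cos φ, r * Real.sin φ] =
        ((1/3) * (deriv (deriv v) r + deriv v r / r)) • E0
        - ((Real.sqrt 3)⁻¹ * (deriv (deriv v) r - deriv v r / r)) •
            (Real.cos (((k : ℝ) - 2) * φ) • E1 k φ
              - Real.sin (((k : ℝ) - 2) * φ) • E2 k φ) := by
  intro r hr φ
  -- derivative facts for v
  have hv1 : ∀ t : ℝ, 0 < t → HasDerivAt v (deriv v t) t := by
    intro t ht
    exact ((hv.differentiableOn (by norm_num)).differentiableAt
      (isOpen_Ioi.mem_nhds ht)).hasDerivAt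
  have hv2 : ∀ t : ℝ, 0 < t → HasDerivAt (deriv v) (deriv (deriv v) t) t := by
    intro t ht
    have h2 : ContDiffOn ℝ 1 (deriv v) (Set.Ioi 0) :=
      hv.deriv_of_isOpen isOpen_Ioi (by norm_num)
    exact ((h2.differentiableOn (by norm_num)).differentiableAt
      (isOpen_Ioi.mem_nhds ht)).hasDerivAt
  set x : Fin 2 → ℝ := ![r * Real.cos φ, r * Real.sin φ] with hxdef
  have hx0 : x 0 = r * Real.cos φ := rfl
  have hx1 : x 1 = r * Real.sin φ := rfl
  have hpyth : (r * Real.cos φ) ^ 2 + (r * Real.sin φ) ^ 2 = r ^ 2 := by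
    nlinarith [Real.sin_sq_add_cos_sq φ]
  have hx : 0 < x 0 ^ 2 + x 1 ^ 2 := by
    rw [hx0, hx1, hpyth]; positivity
  have hρ : auxRho x = r := by
    rw [auxRho, hx0, hx1, hpyth, Real.sqrt_sq hr.le]
  -- Q agrees with the explicit formula on the punctured plane
  have hQeq : ∀ y : Fin 2 → ℝ, 0 < y 0 ^ 2 + y 1 ^ 2 → Q y = v (auxRho y) • E0 := by
    intro y hy
    obtain ⟨θ, h1, h2⟩ := polar_rep hy
    have hyy : ![auxRho y * Real.cos θ, auxRho y * Real.sin θ] = y := by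
      ext i; fin_cases i <;> simp [h1, h2]
    have := hQ (auxRho y) (auxRho_pos hy) θ
    rwa [hyy] at this
  rw [Lop_congr' hQeq hx]
  -- second derivative computations
  have hout2 : ∀ g : (Fin 2 → ℝ) → ℝ, pd 2 g x = 0 := fun g => rfl
  have hin2 : ∀ c : ℝ, ∀ j : Fin 3,
      pd j (fun y => pd 2 (fun z => v (auxRho z) * c) y) x = 0 := by
    intro c j
    have : (fun y : Fin 2 → ℝ => pd 2 (fun z => v (auxRho z) * c) y)
        = fun _ => (0:ℝ) := rfl
    rw [this]
    unfold pd
    split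
    · simp [pd2]
    · rfl
  have hp00 : (pd 0 : ((Fin 2 → ℝ) → ℝ) → (Fin 2 → ℝ) → ℝ) = pd2 0 := rfl
  have hp11 : (pd 1 : ((Fin 2 → ℝ) → ℝ) → (Fin 2 → ℝ) → ℝ) = pd2 1 := rfl
  have hD : ∀ (c : ℝ) (i j : Fin 2),
      pd2 i (fun y => pd2 j (fun z => v (auxRho z) * c) y) x = c * auxD2 v i j x :=
    fun c i j => pd2_pd2_scaled c i j hx hv1 hv2
  -- entry values of auxD2
  have V1 := deriv v r
  have V2 := deriv (deriv v) r
  have hmk2 : ∀ h : (2:ℕ) < 3, (⟨2, h⟩ : Fin 3) = 2 := fun _ => rfl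
  have hrne : r ≠ 0 := hr.ne'
  have h2 : Real.sqrt 2 * Real.sqrt 2 = 2 := Real.mul_self_sqrt (by norm_num)
  have h3 : Real.sqrt 3 * Real.sqrt 3 = 3 := Real.mul_self_sqrt (by norm_num)
  have h2' : Real.sqrt 2 ≠ 0 := by positivity
  have h3' : Real.sqrt 3 ≠ 0 := by positivity
  have e1 : (Real.sqrt 3)⁻¹ * Real.sqrt 2 = 2/3*(Real.sqrt 3/Real.sqrt 2) := by
    field_simp
    linear_combination 3*h2 - 2*h3
  have e2 : (Real.sqrt 3)⁻¹ * (Real.sqrt 2)⁻¹ = 1/3*(Real.sqrt 3/Real.sqrt 2) := by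
    field_simp
    linear_combination -h3
  have hPa : Real.sin ((k:ℝ) * φ / 2)^2 + Real.cos ((k:ℝ) * φ / 2)^2 = 1 :=
    Real.sin_sq_add_cos_sq _
  have hPb : Real.sin φ^2 + Real.cos φ^2 = 1 := Real.sin_sq_add_cos_sq _
  have hX : ∀ w : ℝ, deriv (deriv v) r * (r * w * (r * w)) / r ^ 2
      + deriv v r * (r⁻¹ - r * w * (r * w) / r ^ 3)
      = deriv (deriv v) r * w^2 + (deriv v r / r) * (1 - w^2) := by
    intro w; field_simp
  have hY : ∀ w w' : ℝ, deriv (deriv v) r * (r * w * (r * w')) / r ^ 2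
      + -(deriv v r * (r * w * (r * w') / r ^ 3))
      = (deriv (deriv v) r - deriv v r / r) * (w * w') := by
    intro w w'; field_simp; ring
  ext i j
  fin_cases i <;> fin_cases j <;>
    simp only [Fin.mk_zero, Fin.mk_one, hmk2, Lop, Matrix.of_apply, Fin.sum_univ_three,
      Matrix.smul_apply, smul_eq_mul, hout2, hp00, hp11, hin2, hD, Matrix.sub_apply] <;>
    simp only [E0, E1, E2, nv, mv, e3, vecMulVec_apply, Matrix.smul_apply,
      Matrix.sub_apply, Matrix.add_apply, Matrix.one_apply, smul_eq_mul,
      Matrix.cons_val_zero, Matrix.cons_val_one, Matrix.head_cons, Matrix.head_fin_const,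
      auxD2, hρ, hx0, hx1, Fin.isValue] <;>
    norm_num
  · -- entry (0,0)
    rw [hX (Real.cos φ), hX (Real.sin φ), show ((k:ℝ) - 2) * φ = 2 * ((k:ℝ) * φ / 2) - 2 * φ from by ring]
    simp only [Real.cos_sub, Real.sin_sub, Real.cos_two_mul', Real.sin_two_mul]
    linear_combination ((deriv (deriv v) r - deriv v r / r)*(((Real.cos ((k:ℝ) * φ / 2))^2 - (Real.sin ((k:ℝ) * φ / 2))^2)*((Real.cos ((k:ℝ) * φ / 2))^2 - 1/2)*((Real.cos φ)^2 - (Real.sin φ)^2) + 2*((Real.sin ((k:ℝ) * φ / 2))*(Real.cos ((k:ℝ) * φ / 2)))*((Real.cos ((k:ℝ) * φ / 2))^2 - 1/2)*(2*(Real.sin φ)*(Real.cos φ)))) * e1 + (2*(deriv (deriv v) r - deriv v r / r)*(2*(Real.sin ((k:ℝ) * φ / 2))^2*(Real.cos ((k:ℝ) * φ / 2))^2*((Real.cos φ)^2 - (Real.sin φ)^2) - ((Real.cos ((k:ℝ) * φ / 2))^2 - (Real.sin ((k:ℝ) * φ / 2))^2)*((Real.sin ((k:ℝ) * φ / 2))*(Real.cos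 ((k:ℝ) * φ / 2)))*(2*(Real.sin φ)*(Real.cos φ)))) * e2 + ((Real.sqrt 3 / Real.sqrt 2)*(deriv (deriv v) r - deriv v r / r)*((2/3)*((Real.sin ((k:ℝ) * φ / 2))*(Real.cos ((k:ℝ) * φ / 2)))*(2*(Real.sin φ)*(Real.cos φ)) + (1/3)*(1 + 2*(Real.cos ((k:ℝ) * φ / 2))^2)*((Real.cos φ)^2 - (Real.sin φ)^2))) * hPa + (-((Real.sqrt 3 / Real.sqrt 2)/9)*(deriv (deriv v) r - deriv v r / r)) * hPb
  · -- entry (0,1)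
    rw [hY (Real.sin φ) (Real.cos φ), hY (Real.cos φ) (Real.sin φ), show ((k:ℝ) - 2) * φ = 2 * ((k:ℝ) * φ / 2) - 2 * φ from by ring]
    simp only [Real.cos_sub, Real.sin_sub, Real.cos_two_mul', Real.sin_two_mul]
    linear_combination ((deriv (deriv v) r - deriv v r / r)*((Real.sin ((k:ℝ) * φ / 2))*(Real.cos ((k:ℝ) * φ / 2)))*(((Real.cos ((k:ℝ) * φ / 2))^2 - (Real.sin ((k:ℝ) * φ / 2))^2)*((Real.cos φ)^2 - (Real.sin φ)^2) + 2*((Real.sin ((k:ℝ) * φ / 2))*(Real.cos ((k:ℝ) * φ / 2)))*(2*(Real.sin φ)*(Real.cos φ)))) * e1 + (-(deriv (deriv v) r - deriv v r / r)*((Real.cos ((k:ℝ) * φ / 2))^2 - (Real.sin ((k:ℝ) * φ / 2))^2)*(2*((Real.sin ((k:ℝ) * φ / 2))*(Real.cos ((k:ℝ) * φ / 2)))*((Real.cos φ)^2 - (Real.sin φ)^2) - ((Real.cos ((k:ℝ) * φ / 2))^2 - (Real.sin ((k:ℝ) * φ / 2))^2)*(2*(Real.sin φ)*(Real.cos φ))))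 * e2 + ((Real.sqrt 3 / Real.sqrt 2)*(deriv (deriv v) r - deriv v r / r)*(2*(Real.sin φ)*(Real.cos φ))*(1/3)*((Real.sin ((k:ℝ) * φ / 2))^2 + (Real.cos ((k:ℝ) * φ / 2))^2 + 1)) * hPa
  · -- zero entry
    norm_num [Fin.ext_iff, Matrix.cons_val_two, Matrix.tail_cons, Matrix.head_cons]
  · -- entry (1,0)
    rw [hY (Real.cos φ) (Real.sin φ), hY (Real.sin φ) (Real.cos φ), show ((k:ℝ) - 2) * φ = 2 * ((k:ℝ) * φ / 2) - 2 * φ from by ring]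
    simp only [Real.cos_sub, Real.sin_sub, Real.cos_two_mul', Real.sin_two_mul]
    linear_combination ((deriv (deriv v) r - deriv v r / r)*((Real.sin ((k:ℝ) * φ / 2))*(Real.cos ((k:ℝ) * φ / 2)))*(((Real.cos ((k:ℝ) * φ / 2))^2 - (Real.sin ((k:ℝ) * φ / 2))^2)*((Real.cos φ)^2 - (Real.sin φ)^2) + 2*((Real.sin ((k:ℝ) * φ / 2))*(Real.cos ((k:ℝ) * φ / 2)))*(2*(Real.sin φ)*(Real.cos φ)))) * e1 + (-(deriv (deriv v) r - deriv v r / r)*((Real.cos ((k:ℝ) * φ / 2))^2 - (Real.sin ((k:ℝ) * φ / 2))^2)*(2*((Real.sin ((k:ℝ) * φ / 2))*(Real.cos ((k:ℝ) * φ / 2)))*((Real.cos φ)^2 - (Real.sin φ)^2) - ((Real.cos ((k:ℝ) * φ / 2))^2 - (Real.sin ((k:ℝ) * φ / 2))^2)*(2*(Real.sin φ)*(Real.cos φ)))) * e2 + ((Real.sqrt 3 / Real.sqrt 2)*(deriv (deriv v) r - deriv v r / r)*(2*(Real.sin φ)*(Real.cos φ))*(1/3)*((Real.sin ((k:ℝ)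 * φ / 2))^2 + (Real.cos ((k:ℝ) * φ / 2))^2 + 1)) * hPa
  · -- entry (1,1)
    rw [hX (Real.sin φ), hX (Real.cos φ), show ((k:ℝ) - 2) * φ = 2 * ((k:ℝ) * φ / 2) - 2 * φ from by ring]
    simp only [Real.cos_sub, Real.sin_sub, Real.cos_two_mul', Real.sin_two_mul]
    linear_combination ((deriv (deriv v) r - deriv v r / r)*((Real.sin ((k:ℝ) * φ / 2))^2 - 1/2)*(((Real.cos ((k:ℝ) * φ / 2))^2 - (Real.sin ((k:ℝ) * φ / 2))^2)*((Real.cos φ)^2 - (Real.sin φ)^2) + 2*((Real.sin ((k:ℝ) * φ / 2))*(Real.cos ((k:ℝ) * φ / 2)))*(2*(Real.sin φ)*(Real.cos φ)))) * e1 + (-2*(deriv (deriv v) r - deriv v r / r)*((Real.sin ((k:ℝ) * φ / 2))*(Real.cos ((k:ℝ) * φ / 2)))*(2*((Real.sin ((k:ℝ) * φ / 2))*(Real.cos ((k:ℝ) * φ / 2)))*((Real.cos φ)^2 - (Real.sin φ)^2) - ((Real.cos ((k:ℝ) * φ / 2))^2 - (Real.sin ((k:ℝ) * φ / 2))^2)*(2*(Real.sin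 φ)*(Real.cos φ)))) * e2 + ((Real.sqrt 3 / Real.sqrt 2)*(deriv (deriv v) r - deriv v r / r)*((2/3)*((Real.sin ((k:ℝ) * φ / 2))*(Real.cos ((k:ℝ) * φ / 2)))*(2*(Real.sin φ)*(Real.cos φ)) - (1/3)*(1 + 2*(Real.sin ((k:ℝ) * φ / 2))^2)*((Real.cos φ)^2 - (Real.sin φ)^2))) * hPa + (-((Real.sqrt 3 / Real.sqrt 2)/9)*(deriv (deriv v) r - deriv v r / r)) * hPb
  · -- zero entry
    norm_num [Fin.ext_iff, Matrix.cons_val_two, Matrix.tail_cons, Matrix.head_cons]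
  · -- zero entry
    norm_num [Fin.ext_iff, Matrix.cons_val_two, Matrix.tail_cons, Matrix.head_cons]
  · -- zero entry
    norm_num [Fin.ext_iff, Matrix.cons_val_two, Matrix.tail_cons, Matrix.head_cons]
  · -- entry (2,2)
    simp only [Matrix.cons_val_two, Matrix.tail_cons, Matrix.head_cons]
    rw [hX (Real.cos φ), hX (Real.sin φ)]
    linear_combination ((2*(Real.sqrt 3 / Real.sqrt 2)/9)*(deriv (deriv v) r - deriv v r / r)) * hPb
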